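/- arXiv:0810.5598 — 3 statements merged into one kernel-verified Lean document; each statement's English description precedes it below -/
import Mathlib

section
/- Let W be a complex inner product space carrying a Clifford system c_1, …, c_n, and let v_1, …, v_n ∈ W satisfy the equality ‖∑_{i=1}^n c_i(v_i)‖² = n · ∑_{i=1}^n ‖v_i‖². Then c_1(v_1) = c_2(v_2) = ⋯ = c_n(v_n), and consequently v_i = −(1/n) · c_i(∑_{j=1}^n c_j(v_j)) for every i = 1, …, n. -/
open scoped ComplexInnerProductSpace

/-- **Equality case of the Cauchy–Schwarz estimate for Clifford systems.**
If `c 1, …, c n` is a Clifford system on a complex inner product space `W` and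
`v 1, …, v n ∈ W` satisfy `‖∑ i, c i (v i)‖² = n · ∑ i, ‖v i‖²`, then all the
`c i (v i)` coincide, and consequently `v i = -(1/n) • c i (∑ j, c j (v j))` for
every `i`. -/
theorem clifford_cauchy_schwarz_equality
    {W : Type*} [NormedAddCommGroup W] [InnerProductSpace ℂ W]
    {n : ℕ} (hn : 1 ≤ n)
    (c : Fin n → W →ₗ[ℂ] W)
    (hcliff : ∀ i j : Fin n, ∀ v : W,
      c i (c j v) + c j (c i v) = if i = j then (-2 : ℂ) • v else 0)
    (hskew : ∀ i : Fin n, ∀ v w : W, ⟪c i v, w⟫ = -⟪v, c i w⟫)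
    (v : Fin n → W)
    (heq : ‖∑ i, c i (v i)‖ ^ 2 = (n : ℝ) * ∑ i, ‖v i‖ ^ 2) :
    (∀ i j : Fin n, c i (v i) = c j (v j)) ∧
      ∀ i : Fin n, v i = -((1 : ℂ) / n) • c i (∑ j, c j (v j)) := by
  have hcc : ∀ i : Fin n, ∀ w : W, c i (c i w) = -w := by
    intro i w
    have h := hcliff i i w
    rw [if_pos rfl] at h
    have h2 : (2 : ℂ) • c i (c i w) = (2 : ℂ) • (-w) := by
      rw [two_smul]; rw [h]; simp [smul_neg]
    exact smul_right_injective W (two_ne_zero) h2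
  have hiso : ∀ i : Fin n, ∀ w : W, ‖c i w‖ = ‖w‖ := by
    intro i w
    have hinner : ⟪c i w, c i w⟫ = ⟪w, w⟫ := by
      rw [hskew, hcc]; simp
    rw [@norm_eq_sqrt_re_inner ℂ, @norm_eq_sqrt_re_inner ℂ W, hinner]
  set x : Fin n → W := fun i => c i (v i) with hx
  set S : W := ∑ i, x i with hS
  -- double sum identity
  have hre : ∑ i, ∑ j, (RCLike.re (⟪x i, x j⟫ : ℂ)) = ‖S‖ ^ 2 := by
    have : (⟪S, S⟫ : ℂ) = ∑ i, ∑ j, ⟪x i, x j⟫ := by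
      rw [hS, sum_inner]
      exact Finset.sum_congr rfl fun i _ => inner_sum _ _ _
    have h2 : RCLike.re (⟪S, S⟫ : ℂ) = ∑ i, ∑ j, RCLike.re (⟪x i, x j⟫ : ℂ) := by
      rw [this, map_sum]
      exact Finset.sum_congr rfl fun i _ => map_sum _ _ _
    rw [← h2, ← @norm_sq_eq_re_inner ℂ]
  have hnx : ∀ i, ‖x i‖ = ‖v i‖ := fun i => hiso i (v i)
  have hsum0 : ∑ i, ∑ j, ‖x i - x j‖ ^ 2 = 0 := by
    have expand : ∀ i j : Fin n, ‖x i - x j‖ ^ 2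
        = ‖x i‖ ^ 2 + ‖x j‖ ^ 2 - 2 * RCLike.re (⟪x i, x j⟫ : ℂ) := by
      intro i j
      rw [@norm_sub_sq ℂ]; ring
    calc ∑ i, ∑ j, ‖x i - x j‖ ^ 2
        = ∑ i, ∑ j, (‖x i‖ ^ 2 + ‖x j‖ ^ 2 - 2 * RCLike.re (⟪x i, x j⟫ : ℂ)) := by
          exact Finset.sum_congr rfl fun i _ => Finset.sum_congr rfl fun j _ => expand i j
      _ = (n : ℝ) * ∑ i, ‖x i‖ ^ 2 + (n : ℝ) * ∑ j, ‖x j‖ ^ 2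
            - 2 * ∑ i, ∑ j, RCLike.re (⟪x i, x j⟫ : ℂ) := by
          simp [Finset.sum_sub_distrib, Finset.sum_add_distrib, Finset.mul_sum,
            Finset.sum_comm (f := fun i j => ‖x j‖ ^ 2)]
      _ = 0 := by
          rw [hre]
          have hxv : ∑ i, ‖x i‖ ^ 2 = ∑ i, ‖v i‖ ^ 2 :=
            Finset.sum_congr rfl fun i _ => by rw [hnx]
          rw [hxv, ← heq]
          ring
  have hall : ∀ i j : Fin n, x i = x j := by
    intro i j
    have hnonneg : ∀ i ∈ Finset.univ, (0:ℝ) ≤ ∑ j, ‖x i - x j‖ ^ 2 := fun i _ =>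
      Finset.sum_nonneg fun j _ => sq_nonneg _
    have h1 := (Finset.sum_eq_zero_iff_of_nonneg hnonneg).1 hsum0 i (Finset.mem_univ i)
    have h2 := (Finset.sum_eq_zero_iff_of_nonneg (fun j _ => sq_nonneg _)).1 h1 j
      (Finset.mem_univ j)
    have := pow_eq_zero_iff (n := 2) (by norm_num) |>.1 h2
    rw [norm_eq_zero] at this
    exact sub_eq_zero.1 this
  refine ⟨hall, fun i => ?_⟩
  have hSn : S = (n : ℂ) • x i := by
    rw [hS]
    have : ∀ j : Fin n, x j = x i := fun j => hall j i
    rw [Finset.sum_congr rfl fun j _ => this j, Finset.sum_const, Finset.card_univ,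
      Fintype.card_fin, ← Nat.cast_smul_eq_nsmul ℂ]
  have hciS : c i S = -((n : ℂ) • v i) := by
    rw [hSn, map_smul, hx]
    simp only [hcc i (v i), smul_neg]
  have hn0 : (n : ℂ) ≠ 0 := Nat.cast_ne_zero.2 (by omega)
  rw [hciS, neg_smul, smul_neg, neg_neg, smul_smul, div_mul_cancel₀ _ hn0, one_smul]
end

section
/- Fix L > 0 and a unit vector ψ_0 ∈ ℂ², and define u : ℝ² → ℂ² by u(θ, t) = sin(πt/L)·ψ_0 and Du = c_1·∂_θ u + c_2·∂_t u with the flat planar Dirac operator. Then u(θ, 0) = u(θ, L) = 0 for all θ, the identity ∫_0^{2π} ∫_0^L ‖Du(θ,t)‖² dt dθ = (π²/L²) · ∫_0^{2π} ∫_0^L ‖u(θ,t)‖² dt dθ holds, and the Rayleigh quotient π²/L² satisfies π²/L² < 4π/(2πL) if and only if L > π²/2. (This shows the bound λ_*(D²) ≥ 4π/area fails on the cylinder S¹ × (0, L) of circumference 2π and area 2πL when the spin structure is not bounding at infinity, since u descends to a spinor for the non-bounding spin structure.) -/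
open Real intervalIntegral

/-- **Counterexample on the cylinder with non-bounding spin structure.**
Fix `L > 0` and a unit spinor `ψ₀ ∈ ℂ²`, and let `u(θ,t) = sin(πt/L)·ψ₀` with
`Du = c₁∂_θ u + c₂∂_t u` the flat planar Dirac operator. Then `u` vanishes on
`t = 0` and `t = L`, its Rayleigh quotient identity
`∫₀^{2π}∫₀^L ‖Du‖² = (π²/L²)·∫₀^{2π}∫₀^L ‖u‖²` holds, and
`π²/L² < 4π/(2πL)` iff `L > π²/2`. Hence the bound `λ_*(D²) ≥ 4π/area` fails on the
cylinder `S¹ × (0,L)` (area `2πL`) whenever `L > π²/2`. -/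
theorem cylinder_counterexample
    (c : Fin 2 → EuclideanSpace ℂ (Fin 2) →L[ℂ] EuclideanSpace ℂ (Fin 2))
    (hcliff : ∀ i j : Fin 2, ∀ v : EuclideanSpace ℂ (Fin 2),
      c i (c j v) + c j (c i v) = if i = j then (-2 : ℂ) • v else 0)
    (hskew : ∀ i : Fin 2, ∀ v w : EuclideanSpace ℂ (Fin 2),
      @inner ℂ _ _ (c i v) w = -@inner ℂ _ _ v (c i w))
    (L : ℝ) (hL : 0 < L)
    (ψ₀ : EuclideanSpace ℂ (Fin 2)) (hψ₀ : ‖ψ₀‖ = 1)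
    (u : ℝ × ℝ → EuclideanSpace ℂ (Fin 2))
    (hu : ∀ p : ℝ × ℝ, u p = (Real.sin (π * p.2 / L) : ℂ) • ψ₀)
    (Du : ℝ × ℝ → EuclideanSpace ℂ (Fin 2))
    (hDu : ∀ p : ℝ × ℝ, Du p
      = c 0 (fderiv ℝ u p (1, 0)) + c 1 (fderiv ℝ u p (0, 1))) :
    (∀ θ : ℝ, u (θ, 0) = 0 ∧ u (θ, L) = 0) ∧
      (∫ θ in (0:ℝ)..(2 * π), ∫ t in (0:ℝ)..L, ‖Du (θ, t)‖ ^ 2)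
        = (π ^ 2 / L ^ 2) * ∫ θ in (0:ℝ)..(2 * π), ∫ t in (0:ℝ)..L, ‖u (θ, t)‖ ^ 2 ∧
      (π ^ 2 / L ^ 2 < 4 * π / (2 * π * L) ↔ π ^ 2 / 2 < L) := by
  have hπ : (0:ℝ) < π := pi_pos
  have hkL : (π / L) * L = π := div_mul_cancel₀ π hL.ne'
  have hk0 : (π / L) ≠ 0 := by positivity
  -- derivative of u
  have hder : ∀ p : ℝ × ℝ, HasFDerivAt u
      (((Real.cos (π/L * p.2) * (π/L)) • (ContinuousLinearMap.snd ℝ ℝ ℝ)).smulRight ψ₀) p := by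
    intro p
    have hue : u = fun p : ℝ × ℝ => Real.sin (π/L * p.2) • ψ₀ := by
      funext q; rw [hu q, Complex.coe_smul]; ring_nf
    rw [hue]
    have h1 : HasDerivAt (fun t => Real.sin (π/L*t)) (Real.cos (π/L*p.2) * (π/L)) p.2 := by
      simpa using ((hasDerivAt_id p.2).const_mul (π/L)).sin
    exact (h1.comp_hasFDerivAt p (hasFDerivAt_snd)).smul_const ψ₀
  -- c 1 preserves the norm of ψ₀
  have hc1c1 : c 1 (c 1 ψ₀) = -ψ₀ := by
    have h := hcliff 1 1 ψ₀
    simp only [if_pos rfl] at h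
    have h2 : (2:ℂ) • c 1 (c 1 ψ₀) = (2:ℂ) • (-ψ₀) := by
      rw [← two_smul ℂ (c 1 (c 1 ψ₀))] at *
      rw [h]; simp
    exact smul_right_injective _ (by norm_num) h2
  have hnc1 : ‖c 1 ψ₀‖ = 1 := by
    have h := hskew 1 (c 1 ψ₀) ψ₀
    rw [hc1c1] at h
    have h2 : @inner ℂ _ _ (c 1 ψ₀) (c 1 ψ₀) = @inner ℂ _ _ ψ₀ ψ₀ := by
      have := hskew 1 ψ₀ (c 1 ψ₀)
      rw [hc1c1, inner_neg_right] at this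
      rw [this, neg_neg]
    have h3 : ‖c 1 ψ₀‖ ^ 2 = ‖ψ₀‖ ^ 2 := by
      rw [← real_inner_self_eq_norm_sq, ← real_inner_self_eq_norm_sq]
      · exact congrArg RCLike.re h2
    rw [hψ₀] at h3
    nlinarith [norm_nonneg (c 1 ψ₀), sq_nonneg (‖c 1 ψ₀‖ - 1), sq_nonneg (‖c 1 ψ₀‖ + 1)]
  -- explicit formula for Du
  have hDu' : ∀ p : ℝ × ℝ, Du p = (Real.cos (π/L * p.2) * (π/L)) • c 1 ψ₀ := by
    intro p
    rw [hDu p, (hder p).fderiv]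
    simp [ContinuousLinearMap.smulRight_apply, ContinuousLinearMap.map_smul_of_tower]
  -- norm computations
  have hnu : ∀ θ t : ℝ, ‖u (θ, t)‖ ^ 2 = Real.sin (π/L * t) ^ 2 := by
    intro θ t
    rw [hu (θ, t), Complex.coe_smul, norm_smul, hψ₀, mul_one, Real.norm_eq_abs, sq_abs]
    have : π * t / L = π / L * t := by ring
    rw [this]
  have hnDu : ∀ θ t : ℝ, ‖Du (θ, t)‖ ^ 2 = (π/L)^2 * Real.cos (π/L * t) ^ 2 := by
    intro θ t
    rw [hDu' (θ, t), norm_smul, hnc1, mul_one, Real.norm_eq_abs, sq_abs]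
    ring
  -- inner integrals
  have hIsin : (∫ t in (0:ℝ)..L, Real.sin (π/L * t) ^ 2) = L / 2 := by
    rw [intervalIntegral.integral_comp_mul_left (fun x => Real.sin x ^ 2) hk0]
    rw [mul_zero, hkL, integral_sin_sq]
    simp [Real.sin_pi]
    field_simp
  have hIcos : (∫ t in (0:ℝ)..L, Real.cos (π/L * t) ^ 2) = L / 2 := by
    rw [intervalIntegral.integral_comp_mul_left (fun x => Real.cos x ^ 2) hk0]
    rw [mul_zero, hkL, integral_cos_sq]
    simp [Real.sin_pi]
    field_simp
  refine ⟨?_, ?_, ?_⟩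
  · intro θ
    constructor
    · rw [hu (θ, 0)]; simp
    · rw [hu (θ, L)]
      have : π * L / L = π := by field_simp
      simp [this, Real.sin_pi]
  · have h1 : ∀ θ : ℝ, (∫ t in (0:ℝ)..L, ‖Du (θ, t)‖ ^ 2) = (π/L)^2 * (L/2) := by
      intro θ
      simp_rw [hnDu θ]
      rw [intervalIntegral.integral_const_mul, hIcos]
    have h2 : ∀ θ : ℝ, (∫ t in (0:ℝ)..L, ‖u (θ, t)‖ ^ 2) = L/2 := by
      intro θ
      simp_rw [hnu θ]
      exact hIsin
    simp_rw [h1, h2]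
    rw [intervalIntegral.integral_const, intervalIntegral.integral_const]
    simp only [smul_eq_mul, sub_zero]
    field_simp
  · have h4 : 4 * π / (2 * π * L) = 2 / L := by
      field_simp
      ring
    rw [h4, div_lt_div_iff₀ (by positivity) hL]
    constructor
    · intro h; nlinarith
    · intro h; nlinarith
end

section
/- For an integer k ≥ 1 let f_k(θ, φ) = cos θ · cos(φ/k) on R_k = (−π/2, π/2) × (0, 2kπ), with the area measure dA = cos θ dθ dφ. Then: (i) ∫_{R_k} f_k dA = 0; (ii) ∫_{R_k} f_k² dA = 4kπ/3; (iii) ∫_{R_k} ((∂_θ f_k)² + cos^{−2}θ · (∂_φ f_k)²) dA = kπ·(2/3 + 2/k²); hence the Rayleigh quotient of f_k equals 2 − (3/2)(1 − 1/k²) = 1/2 + 3/(2k²), which is strictly less than 2 for every k ≥ 2. (Thus the Lichnerowicz bound λ_1(Δ) ≥ nκ/(n−1) = 2 for Ricci curvature ≥ 1 in dimension 2 is violated on the incomplete surface M_k for k ≥ 2, even by a test function orthogonal to the constants.) -/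
open Real intervalIntegral

section aux

private lemma aux_cos_int {c : ℝ} (hc : c ≠ 0) :
    (∫ φ in (0:ℝ)..(2 * c * π), cos (φ / c)) = 0 := by
  rw [intervalIntegral.integral_comp_div _ hc]
  have h1 : (2 * c * π) / c = 2 * π := by field_simp
  rw [h1, show (0:ℝ)/c = 0 by simp]
  simp [Real.sin_two_pi]

private lemma aux_cos_sq_int {c : ℝ} (hc : c ≠ 0) :
    (∫ φ in (0:ℝ)..(2 * c * π), cos (φ / c) ^ 2) = c * π := by
  rw [intervalIntegral.integral_comp_div (fun x => cos x ^ 2) hc]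
  have h1 : (2 * c * π) / c = 2 * π := by field_simp
  rw [h1, show (0:ℝ)/c = 0 by simp]
  rw [integral_cos_sq]
  simp [Real.sin_two_pi, Real.cos_two_pi, smul_eq_mul]

private lemma aux_sin_sq_int {c : ℝ} (hc : c ≠ 0) :
    (∫ φ in (0:ℝ)..(2 * c * π), sin (φ / c) ^ 2) = c * π := by
  rw [intervalIntegral.integral_comp_div (fun x => sin x ^ 2) hc]
  have h1 : (2 * c * π) / c = 2 * π := by field_simp
  rw [h1, show (0:ℝ)/c = 0 by simp]
  rw [integral_sin_sq]
  simp [Real.sin_two_pi, Real.cos_two_pi, smul_eq_mul]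

private lemma aux_combo {c : ℝ} (hc : c ≠ 0) (A B : ℝ) :
    (∫ φ in (0:ℝ)..(2 * c * π), (A * cos (φ / c) ^ 2 + B * sin (φ / c) ^ 2))
      = (A + B) * (c * π) := by
  rw [intervalIntegral.integral_add]
  · rw [intervalIntegral.integral_const_mul, intervalIntegral.integral_const_mul,
      aux_cos_sq_int hc, aux_sin_sq_int hc]
    ring
  · exact (Continuous.intervalIntegrable (by fun_prop) _ _)
  · exact (Continuous.intervalIntegrable (by fun_prop) _ _)

end aux

/-- **Violation of the Lichnerowicz bound on the incomplete surface `M_k`.**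
For `k ≥ 1` let `f_k(θ,φ) = cos θ · cos(φ/k)` on `R_k = (-π/2, π/2) × (0, 2kπ)`, with
area measure `cos θ dθ dφ`. Then `∫ f_k dA = 0`, `∫ f_k² dA = 4kπ/3`,
`∫ (∂_θ f_k)² + cos⁻²θ (∂_φ f_k)² dA = kπ(2/3 + 2/k²)`, and the Rayleigh quotient
equals `2 − (3/2)(1 − 1/k²) = 1/2 + 3/(2k²)`, which is `< 2` for every `k ≥ 2`. -/
theorem lichnerowicz_violation_Mk
    (k : ℕ) (hk : 1 ≤ k)
    (f : ℝ → ℝ → ℝ)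
    (hf : ∀ θ φ : ℝ, f θ φ = cos θ * cos (φ / k)) :
    (∫ θ in (-(π / 2))..(π / 2), ∫ φ in (0 : ℝ)..(2 * k * π), f θ φ * cos θ) = 0 ∧
    (∫ θ in (-(π / 2))..(π / 2), ∫ φ in (0 : ℝ)..(2 * k * π), (f θ φ) ^ 2 * cos θ)
        = 4 * k * π / 3 ∧
    (∫ θ in (-(π / 2))..(π / 2), ∫ φ in (0 : ℝ)..(2 * k * π),
        ((deriv (fun s => f s φ) θ) ^ 2
          + (1 / cos θ ^ 2) * (deriv (fun s => f θ s) φ) ^ 2) * cos θ)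
        = k * π * (2 / 3 + 2 / (k : ℝ) ^ 2) ∧
    (k * π * (2 / 3 + 2 / (k : ℝ) ^ 2)) / (4 * k * π / 3)
        = 2 - (3 / 2) * (1 - 1 / (k : ℝ) ^ 2) ∧
    2 - (3 / 2) * (1 - 1 / (k : ℝ) ^ 2) = 1 / 2 + 3 / (2 * (k : ℝ) ^ 2) ∧
    (2 ≤ k → 1 / 2 + 3 / (2 * (k : ℝ) ^ 2) < 2) := by
  have hk0 : (k : ℝ) ≠ 0 := by positivity
  have hkpos : (0:ℝ) < k := by exact_mod_cast hk
  refine ⟨?_, ?_, ?_, ?_, ?_, ?_⟩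
  · -- (i)
    have hinner : ∀ θ : ℝ,
        (∫ φ in (0:ℝ)..(2 * k * π), f θ φ * cos θ) = 0 := by
      intro θ
      simp only [hf]
      rw [intervalIntegral.integral_mul_const, intervalIntegral.integral_const_mul,
        aux_cos_int hk0]
      ring
    simp [hinner]
  · -- (ii)
    have hinner : ∀ θ : ℝ,
        (∫ φ in (0:ℝ)..(2 * k * π), (f θ φ) ^ 2 * cos θ)
          = (cos θ ^ 2 * cos θ) * ((k:ℝ) * π) := by
      intro θ
      simp only [hf, mul_pow]
      rw [show (fun φ => cos θ ^ 2 * cos (φ / k) ^ 2 * cos θ)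
            = fun φ => (cos θ ^ 2 * cos θ) * cos (φ / k) ^ 2 from funext fun φ => by ring]
      rw [intervalIntegral.integral_const_mul, aux_cos_sq_int hk0]
    simp only [hinner]
    rw [intervalIntegral.integral_mul_const]
    have h3 : (∫ θ in (-(π / 2))..(π / 2), cos θ ^ 2 * cos θ)
        = ∫ θ in (-(π / 2))..(π / 2), cos θ ^ 3 := by
      exact intervalIntegral.integral_congr fun θ _ => by ring
    rw [h3, integral_cos_pow_three]
    simp only [Real.sin_pi_div_two, Real.sin_neg]
    ring
  · -- (iii)
    have hinner : ∀ θ : ℝ,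
        (∫ φ in (0:ℝ)..(2 * k * π),
            ((deriv (fun s => f s φ) θ) ^ 2
              + (1 / cos θ ^ 2) * (deriv (fun s => f θ s) φ) ^ 2) * cos θ)
          = (sin θ ^ 2 * cos θ + cos θ * (1/(k:ℝ)^2)) * ((k:ℝ) * π) := by
      intro θ
      have hDθ : ∀ φ : ℝ, deriv (fun s => f s φ) θ = -sin θ * cos (φ / k) := by
        intro φ
        simp only [hf]
        rw [deriv_mul_const (by exact Real.differentiable_cos.differentiableAt)]
        simp [Real.deriv_cos]
      have hDφ : ∀ φ : ℝ, deriv (fun s => f θ s) φ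
          = cos θ * (-sin (φ / k) * (1 / (k:ℝ))) := by
        intro φ
        simp only [hf]
        have h2 : HasDerivAt (fun s : ℝ => cos (s / (k:ℝ)))
            (-sin (φ / k) * (1 / (k:ℝ))) φ := by
          have := (Real.hasDerivAt_cos ((φ:ℝ) / k)).comp φ
            ((hasDerivAt_id φ).div_const (k:ℝ))
          simpa [Function.comp_def] using this
        rw [deriv_const_mul _ h2.differentiableAt, h2.deriv]
      have heq : ∀ φ : ℝ,
          ((deriv (fun s => f s φ) θ) ^ 2
            + (1 / cos θ ^ 2) * (deriv (fun s => f θ s) φ) ^ 2) * cos θ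
          = (sin θ ^ 2 * cos θ) * cos (φ / k) ^ 2
            + (cos θ * (1/(k:ℝ)^2)) * sin (φ / k) ^ 2 := by
        intro φ
        rw [hDθ φ, hDφ φ]
        rcases eq_or_ne (cos θ) 0 with h | h
        · simp [h]
        · field_simp
      rw [intervalIntegral.integral_congr (fun φ _ => heq φ)]
      exact aux_combo hk0 _ _
    simp only [hinner]
    rw [intervalIntegral.integral_mul_const]
    rw [intervalIntegral.integral_add
      ((Continuous.intervalIntegrable (by fun_prop) _ _))
      ((Continuous.intervalIntegrable (by fun_prop) _ _))]
    rw [integral_sin_sq_mul_cos, intervalIntegral.integral_mul_const, integral_cos]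
    simp [Real.sin_pi_div_two]
    field_simp
    ring
  · field_simp
    ring
  · field_simp
    ring
  · intro h2
    have h2' : (2:ℝ) ≤ k := by exact_mod_cast h2
    have : (4:ℝ) ≤ (k:ℝ)^2 := by nlinarith
    have hpos : (0:ℝ) < (k:ℝ)^2 := by positivity
    rw [div_add_div _ _ (by norm_num) (by positivity)]
    rw [div_lt_iff₀ (by positivity)]
    nlinarith
end
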